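/- Let α ∈ ℂ satisfy α³ + α² + α − 1 = 0 and set (c₀, …, c₈) = (1, 1, 1, 1, α, −α−α², −α−α², −α, −1), c₉ = −α, c₁₀ = α, c₁₁ = −α−α², c₁₂ = 1. Define the linear map L : ℂ⁶ → ℂ⁶ sending (θ₀, …, θ₅) to (θ₉, θ₁₂, θ₁₀, θ₂, θ₁₃, θ₁₁), where θ₆ = (c₆θ₅ + c₄θ₀)/c₉, θ₇ = (c₇θ₅ + c₂θ₀)/c₉, θ₈ = (c₃θ₄ + c₀θ₃)/c₁₀, θ₉ = (c₄θ₄ + c₁θ₃)/c₁₀, θ₁₀ = (−c₀θ₁ + c₆θ₅ + c₄θ₀)/c₁₁, θ₁₁ = (c₃c₉θ₁ + c₂c₆θ₅ + c₂c₄θ₀)/(c₁₁c₉), θ₁₂ = −(c₆c₇θ₅ + c₂c₆θ₀ + c₃c₉θ₄ + c₀c₉θ₃)/(c₁₂c₉), θ₁₃ = −(c₁₀c₇θ₅ + c₁₀c₂θ₀ + c₁c₃θ₄ + c₀c₁θ₃)/(c₁₀c₁₂). Then the 6×6 matrix of L satisfies det(t·I₆ − L) = t⁶ + (2α²+2α+2)t⁵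 + (α²+2α+4)t⁴ + (2α²+4α+2)t³ + (α²+2α+4)t² + (2α²+2α+2)t + 1 for all t ∈ ℂ. -/

import Mathlib

private lemma fsucc_1_0 : Fin.succ (0 : Fin 1) = 1 := rfl
private lemma fcast_1_0 : Fin.castSucc (0 : Fin 1) = 0 := rfl
private lemma fsucc_2_0 : Fin.succ (0 : Fin 2) = 1 := rfl
private lemma fcast_2_0 : Fin.castSucc (0 : Fin 2) = 0 := rfl
private lemma fsucc_2_1 : Fin.succ (1 : Fin 2) = 2 := rfl
private lemma fcast_2_1 : Fin.castSucc (1 : Fin 2) = 1 := rfl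
private lemma fsucc_3_0 : Fin.succ (0 : Fin 3) = 1 := rfl
private lemma fcast_3_0 : Fin.castSucc (0 : Fin 3) = 0 := rfl
private lemma fsucc_3_1 : Fin.succ (1 : Fin 3) = 2 := rfl
private lemma fcast_3_1 : Fin.castSucc (1 : Fin 3) = 1 := rfl
private lemma fsucc_3_2 : Fin.succ (2 : Fin 3) = 3 := rfl
private lemma fcast_3_2 : Fin.castSucc (2 : Fin 3) = 2 := rfl
private lemma fsucc_4_0 : Fin.succ (0 : Fin 4) = 1 := rfl
private lemma fcast_4_0 : Fin.castSucc (0 : Fin 4) = 0 := rfl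
private lemma fsucc_4_1 : Fin.succ (1 : Fin 4) = 2 := rfl
private lemma fcast_4_1 : Fin.castSucc (1 : Fin 4) = 1 := rfl
private lemma fsucc_4_2 : Fin.succ (2 : Fin 4) = 3 := rfl
private lemma fcast_4_2 : Fin.castSucc (2 : Fin 4) = 2 := rfl
private lemma fsucc_4_3 : Fin.succ (3 : Fin 4) = 4 := rfl
private lemma fcast_4_3 : Fin.castSucc (3 : Fin 4) = 3 := rfl
private lemma fsucc_5_0 : Fin.succ (0 : Fin 5) = 1 := rfl
private lemma fcast_5_0 : Fin.castSucc (0 : Fin 5) = 0 := rfl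
private lemma fsucc_5_1 : Fin.succ (1 : Fin 5) = 2 := rfl
private lemma fcast_5_1 : Fin.castSucc (1 : Fin 5) = 1 := rfl
private lemma fsucc_5_2 : Fin.succ (2 : Fin 5) = 3 := rfl
private lemma fcast_5_2 : Fin.castSucc (2 : Fin 5) = 2 := rfl
private lemma fsucc_5_3 : Fin.succ (3 : Fin 5) = 4 := rfl
private lemma fcast_5_3 : Fin.castSucc (3 : Fin 5) = 3 := rfl
private lemma fsucc_5_4 : Fin.succ (4 : Fin 5) = 5 := rfl
private lemma fcast_5_4 : Fin.castSucc (4 : Fin 5) = 4 := rfl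
private lemma fsab_1_0_0 : Fin.succAbove (0 : Fin 2) (0 : Fin 1) = 1 := rfl
private lemma fsab_1_1_0 : Fin.succAbove (1 : Fin 2) (0 : Fin 1) = 0 := rfl
private lemma fsab_2_0_0 : Fin.succAbove (0 : Fin 3) (0 : Fin 2) = 1 := rfl
private lemma fsab_2_0_1 : Fin.succAbove (0 : Fin 3) (1 : Fin 2) = 2 := rfl
private lemma fsab_2_1_0 : Fin.succAbove (1 : Fin 3) (0 : Fin 2) = 0 := rfl
private lemma fsab_2_1_1 : Fin.succAbove (1 : Fin 3) (1 : Fin 2) = 2 := rfl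
private lemma fsab_2_2_0 : Fin.succAbove (2 : Fin 3) (0 : Fin 2) = 0 := rfl
private lemma fsab_2_2_1 : Fin.succAbove (2 : Fin 3) (1 : Fin 2) = 1 := rfl
private lemma fsab_3_0_0 : Fin.succAbove (0 : Fin 4) (0 : Fin 3) = 1 := rfl
private lemma fsab_3_0_1 : Fin.succAbove (0 : Fin 4) (1 : Fin 3) = 2 := rfl
private lemma fsab_3_0_2 : Fin.succAbove (0 : Fin 4) (2 : Fin 3) = 3 := rfl
private lemma fsab_3_1_0 : Fin.succAbove (1 : Fin 4) (0 : Fin 3) = 0 := rfl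
private lemma fsab_3_1_1 : Fin.succAbove (1 : Fin 4) (1 : Fin 3) = 2 := rfl
private lemma fsab_3_1_2 : Fin.succAbove (1 : Fin 4) (2 : Fin 3) = 3 := rfl
private lemma fsab_3_2_0 : Fin.succAbove (2 : Fin 4) (0 : Fin 3) = 0 := rfl
private lemma fsab_3_2_1 : Fin.succAbove (2 : Fin 4) (1 : Fin 3) = 1 := rfl
private lemma fsab_3_2_2 : Fin.succAbove (2 : Fin 4) (2 : Fin 3) = 3 := rfl
private lemma fsab_3_3_0 : Fin.succAbove (3 : Fin 4) (0 : Fin 3) = 0 := rfl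
private lemma fsab_3_3_1 : Fin.succAbove (3 : Fin 4) (1 : Fin 3) = 1 := rfl
private lemma fsab_3_3_2 : Fin.succAbove (3 : Fin 4) (2 : Fin 3) = 2 := rfl
private lemma fsab_4_0_0 : Fin.succAbove (0 : Fin 5) (0 : Fin 4) = 1 := rfl
private lemma fsab_4_0_1 : Fin.succAbove (0 : Fin 5) (1 : Fin 4) = 2 := rfl
private lemma fsab_4_0_2 : Fin.succAbove (0 : Fin 5) (2 : Fin 4) = 3 := rfl
private lemma fsab_4_0_3 : Fin.succAbove (0 : Fin 5) (3 : Fin 4) = 4 := rfl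
private lemma fsab_4_1_0 : Fin.succAbove (1 : Fin 5) (0 : Fin 4) = 0 := rfl
private lemma fsab_4_1_1 : Fin.succAbove (1 : Fin 5) (1 : Fin 4) = 2 := rfl
private lemma fsab_4_1_2 : Fin.succAbove (1 : Fin 5) (2 : Fin 4) = 3 := rfl
private lemma fsab_4_1_3 : Fin.succAbove (1 : Fin 5) (3 : Fin 4) = 4 := rfl
private lemma fsab_4_2_0 : Fin.succAbove (2 : Fin 5) (0 : Fin 4) = 0 := rfl
private lemma fsab_4_2_1 : Fin.succAbove (2 : Fin 5) (1 : Fin 4) = 1 := rfl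
private lemma fsab_4_2_2 : Fin.succAbove (2 : Fin 5) (2 : Fin 4) = 3 := rfl
private lemma fsab_4_2_3 : Fin.succAbove (2 : Fin 5) (3 : Fin 4) = 4 := rfl
private lemma fsab_4_3_0 : Fin.succAbove (3 : Fin 5) (0 : Fin 4) = 0 := rfl
private lemma fsab_4_3_1 : Fin.succAbove (3 : Fin 5) (1 : Fin 4) = 1 := rfl
private lemma fsab_4_3_2 : Fin.succAbove (3 : Fin 5) (2 : Fin 4) = 2 := rfl
private lemma fsab_4_3_3 : Fin.succAbove (3 : Fin 5) (3 : Fin 4) = 4 := rfl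
private lemma fsab_4_4_0 : Fin.succAbove (4 : Fin 5) (0 : Fin 4) = 0 := rfl
private lemma fsab_4_4_1 : Fin.succAbove (4 : Fin 5) (1 : Fin 4) = 1 := rfl
private lemma fsab_4_4_2 : Fin.succAbove (4 : Fin 5) (2 : Fin 4) = 2 := rfl
private lemma fsab_4_4_3 : Fin.succAbove (4 : Fin 5) (3 : Fin 4) = 3 := rfl
private lemma fsab_5_0_0 : Fin.succAbove (0 : Fin 6) (0 : Fin 5) = 1 := rfl
private lemma fsab_5_0_1 : Fin.succAbove (0 : Fin 6) (1 : Fin 5) = 2 := rfl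
private lemma fsab_5_0_2 : Fin.succAbove (0 : Fin 6) (2 : Fin 5) = 3 := rfl
private lemma fsab_5_0_3 : Fin.succAbove (0 : Fin 6) (3 : Fin 5) = 4 := rfl
private lemma fsab_5_0_4 : Fin.succAbove (0 : Fin 6) (4 : Fin 5) = 5 := rfl
private lemma fsab_5_1_0 : Fin.succAbove (1 : Fin 6) (0 : Fin 5) = 0 := rfl
private lemma fsab_5_1_1 : Fin.succAbove (1 : Fin 6) (1 : Fin 5) = 2 := rfl
private lemma fsab_5_1_2 : Fin.succAbove (1 : Fin 6) (2 : Fin 5) = 3 := rfl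
private lemma fsab_5_1_3 : Fin.succAbove (1 : Fin 6) (3 : Fin 5) = 4 := rfl
private lemma fsab_5_1_4 : Fin.succAbove (1 : Fin 6) (4 : Fin 5) = 5 := rfl
private lemma fsab_5_2_0 : Fin.succAbove (2 : Fin 6) (0 : Fin 5) = 0 := rfl
private lemma fsab_5_2_1 : Fin.succAbove (2 : Fin 6) (1 : Fin 5) = 1 := rfl
private lemma fsab_5_2_2 : Fin.succAbove (2 : Fin 6) (2 : Fin 5) = 3 := rfl
private lemma fsab_5_2_3 : Fin.succAbove (2 : Fin 6) (3 : Fin 5) = 4 := rfl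
private lemma fsab_5_2_4 : Fin.succAbove (2 : Fin 6) (4 : Fin 5) = 5 := rfl
private lemma fsab_5_3_0 : Fin.succAbove (3 : Fin 6) (0 : Fin 5) = 0 := rfl
private lemma fsab_5_3_1 : Fin.succAbove (3 : Fin 6) (1 : Fin 5) = 1 := rfl
private lemma fsab_5_3_2 : Fin.succAbove (3 : Fin 6) (2 : Fin 5) = 2 := rfl
private lemma fsab_5_3_3 : Fin.succAbove (3 : Fin 6) (3 : Fin 5) = 4 := rfl
private lemma fsab_5_3_4 : Fin.succAbove (3 : Fin 6) (4 : Fin 5) = 5 := rfl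
private lemma fsab_5_4_0 : Fin.succAbove (4 : Fin 6) (0 : Fin 5) = 0 := rfl
private lemma fsab_5_4_1 : Fin.succAbove (4 : Fin 6) (1 : Fin 5) = 1 := rfl
private lemma fsab_5_4_2 : Fin.succAbove (4 : Fin 6) (2 : Fin 5) = 2 := rfl
private lemma fsab_5_4_3 : Fin.succAbove (4 : Fin 6) (3 : Fin 5) = 3 := rfl
private lemma fsab_5_4_4 : Fin.succAbove (4 : Fin 6) (4 : Fin 5) = 5 := rfl
private lemma fsab_5_5_0 : Fin.succAbove (5 : Fin 6) (0 : Fin 5) = 0 := rfl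
private lemma fsab_5_5_1 : Fin.succAbove (5 : Fin 6) (1 : Fin 5) = 1 := rfl
private lemma fsab_5_5_2 : Fin.succAbove (5 : Fin 6) (2 : Fin 5) = 2 := rfl
private lemma fsab_5_5_3 : Fin.succAbove (5 : Fin 6) (3 : Fin 5) = 3 := rfl
private lemma fsab_5_5_4 : Fin.succAbove (5 : Fin 6) (4 : Fin 5) = 4 := rfl


private lemma cv1 {β : Type*} (x : β) (u : Fin 5 → β) : Matrix.vecCons x u 1 = u 0 := rfl
private lemma cv2 {β : Type*} (x : β) (u : Fin 5 → β) : Matrix.vecCons x u 2 = u 1 := rfl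
private lemma cv3 {β : Type*} (x : β) (u : Fin 5 → β) : Matrix.vecCons x u 3 = u 2 := rfl
private lemma cv4 {β : Type*} (x : β) (u : Fin 5 → β) : Matrix.vecCons x u 4 = u 3 := rfl
private lemma cv5 {β : Type*} (x : β) (u : Fin 5 → β) : Matrix.vecCons x u 5 = u 4 := rfl
private lemma dv1 {β : Type*} (x : β) (u : Fin 4 → β) : Matrix.vecCons x u 1 = u 0 := rfl
private lemma dv2 {β : Type*} (x : β) (u : Fin 4 → β) : Matrix.vecCons x u 2 = u 1 := rfl
private lemma dv3 {β : Type*} (x : β) (u : Fin 4 → β) : Matrix.vecCons x u 3 = u 2 := rfl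
private lemma dv4 {β : Type*} (x : β) (u : Fin 4 → β) : Matrix.vecCons x u 4 = u 3 := rfl
private lemma ev1 {β : Type*} (x : β) (u : Fin 3 → β) : Matrix.vecCons x u 1 = u 0 := rfl
private lemma ev2 {β : Type*} (x : β) (u : Fin 3 → β) : Matrix.vecCons x u 2 = u 1 := rfl
private lemma ev3 {β : Type*} (x : β) (u : Fin 3 → β) : Matrix.vecCons x u 3 = u 2 := rfl
private lemma fv1 {β : Type*} (x : β) (u : Fin 2 → β) : Matrix.vecCons x u 1 = u 0 := rfl
private lemma fv2 {β : Type*} (x : β) (u : Fin 2 → β) : Matrix.vecCons x u 2 = u 1 := rfl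
private lemma gv1 {β : Type*} (x : β) (u : Fin 1 → β) : Matrix.vecCons x u 1 = u 0 := rfl

set_option maxHeartbeats 4000000 in
set_option maxRecDepth 16000 in
private lemma det6 (t a b c d e f g h i j k l m n o p q : ℂ) :
    (!![t,0,0,a,b,0; c,t,0,d,e,f; g,h,t,0,0,i; (0:ℂ),0,j,t,0,0; k,0,0,l,m,n; o,p,0,0,0,q]).det
      = t^4*m*q - t^3*b*k*q + t^3*b*n*o + t^3*e*n*p - t^3*f*m*p - t^2*b*c*n*p + t^2*b*f*k*p
        + t*a*g*j*m*q - t*a*i*j*m*o - t*b*g*j*l*q + t*b*i*j*l*o + t*d*h*j*m*q - t*d*i*j*m*p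
        - t*e*h*j*l*q + t*e*i*j*l*p - a*c*h*j*m*q + a*c*i*j*m*p + a*e*g*j*n*p + a*e*h*j*k*q
        - a*e*h*j*n*o - a*e*i*j*k*p - a*f*g*j*m*p + a*f*h*j*m*o + b*c*h*j*l*q - b*c*i*j*l*p
        - b*d*g*j*n*p - b*d*h*j*k*q + b*d*h*j*n*o + b*d*i*j*k*p + b*f*g*j*l*p - b*f*h*j*l*o := by
  simp (config := { maxSteps := 100000000 }) [Matrix.det_succ_row_zero, Fin.sum_univ_succ,
    cv1,cv2,cv3,cv4,cv5,dv1,dv2,dv3,dv4,ev1,ev2,ev3,fv1,fv2,gv1,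
    fsucc_1_0, fcast_1_0, fsucc_2_0, fcast_2_0, fsucc_2_1, fcast_2_1, fsucc_3_0, fcast_3_0, fsucc_3_1, fcast_3_1, fsucc_3_2, fcast_3_2, fsucc_4_0, fcast_4_0, fsucc_4_1, fcast_4_1, fsucc_4_2, fcast_4_2, fsucc_4_3, fcast_4_3, fsucc_5_0, fcast_5_0, fsucc_5_1, fcast_5_1, fsucc_5_2, fcast_5_2, fsucc_5_3, fcast_5_3, fsucc_5_4, fcast_5_4, fsab_1_0_0, fsab_1_1_0, fsab_2_0_0, fsab_2_0_1, fsab_2_1_0, fsab_2_1_1, fsab_2_2_0, fsab_2_2_1, fsab_3_0_0, fsab_3_0_1, fsab_3_0_2, fsab_3_1_0, fsab_3_1_1, fsab_3_1_2, fsab_3_2_0, fsab_3_2_1, fsab_3_2_2, fsab_3_3_0, fsab_3_3_1, fsab_3_3_2, fsab_4_0_0, fsab_4_0_1, fsab_4_0_2, fsab_4_0_3, fsab_4_1_0, fsab_4_1_1, fsab_4_1_2, fsab_4_1_3, fsab_4_2_0, fsab_4_2_1, fsab_4_2_2, fsab_4_2_3, fsab_4_3_0, fsab_4_3_1, fsab_4_3_2,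 fsab_4_3_3, fsab_4_4_0, fsab_4_4_1, fsab_4_4_2, fsab_4_4_3, fsab_5_0_0, fsab_5_0_1, fsab_5_0_2, fsab_5_0_3, fsab_5_0_4, fsab_5_1_0, fsab_5_1_1, fsab_5_1_2, fsab_5_1_3, fsab_5_1_4, fsab_5_2_0, fsab_5_2_1, fsab_5_2_2, fsab_5_2_3, fsab_5_2_4, fsab_5_3_0, fsab_5_3_1, fsab_5_3_2, fsab_5_3_3, fsab_5_3_4, fsab_5_4_0, fsab_5_4_1, fsab_5_4_2, fsab_5_4_3, fsab_5_4_4, fsab_5_5_0, fsab_5_5_1, fsab_5_5_2, fsab_5_5_3, fsab_5_5_4]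
  ring1

set_option maxHeartbeats 4000000 in
set_option maxRecDepth 16000 in
/-- The C²-torsion polynomial of m036 at the sign-deformed Ptolemy solution
(boundary obstruction class covering lifts of the geometric representation). -/
theorem m036_C2_torsion_geometric_class (α : ℂ) (hα : α ^ 3 + α ^ 2 + α - 1 = 0)
    (L : (Fin 6 → ℂ) →ₗ[ℂ] (Fin 6 → ℂ))
    (hL : ∀ θ : Fin 6 → ℂ,
      let c0 : ℂ := 1; let c1 : ℂ := 1; let c2 : ℂ := 1; let c3 : ℂ := 1
      let c4 : ℂ := α; let c5 : ℂ := -α - α ^ 2; let c6 : ℂ := -α - α ^ 2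
      let c7 : ℂ := -α; let c8 : ℂ := -1
      let c9 : ℂ := -α; let c10 : ℂ := α; let c11 : ℂ := -α - α ^ 2; let c12 : ℂ := 1
      let θ6 : ℂ := (c6 * θ 5 + c4 * θ 0) / c9
      let θ7 : ℂ := (c7 * θ 5 + c2 * θ 0) / c9
      let θ8 : ℂ := (c3 * θ 4 + c0 * θ 3) / c10
      let θ9 : ℂ := (c4 * θ 4 + c1 * θ 3) / c10
      let θ10 : ℂ := (-(c0 * θ 1) + c6 * θ 5 + c4 * θ 0) / c11
      let θ11 : ℂ := (c3 * c9 * θ 1 + c2 * c6 * θ 5 + c2 * c4 * θ 0) / (c11 * c9)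
      let θ12 : ℂ := -((c6 * c7 * θ 5 + c2 * c6 * θ 0 + c3 * c9 * θ 4 + c0 * c9 * θ 3) / (c12 * c9))
      let θ13 : ℂ := -((c10 * c7 * θ 5 + c10 * c2 * θ 0 + c1 * c3 * θ 4 + c0 * c1 * θ 3) / (c10 * c12))
      L θ = ![θ9, θ12, θ10, θ 2, θ13, θ11]) :
    ∀ t : ℂ,
      (t • (1 : Matrix (Fin 6) (Fin 6) ℂ) - LinearMap.toMatrix' L).det =
        t ^ 6 + (2 * α ^ 2 + 2 * α + 2) * t ^ 5 + (α ^ 2 + 2 * α + 4) * t ^ 4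
          + (2 * α ^ 2 + 4 * α + 2) * t ^ 3 + (α ^ 2 + 2 * α + 4) * t ^ 2
          + (2 * α ^ 2 + 2 * α + 2) * t + 1 := by
  intro t
  have h0 : α ≠ 0 := by
    intro h; rw [h] at hα; norm_num at hα
  have h1 : (1 : ℂ) + α ≠ 0 := by
    intro h
    have : α = -1 := by linear_combination h
    rw [this] at hα; norm_num at hα
  have h2 : -α - α ^ 2 ≠ 0 := by
    intro h
    have : α * (1 + α) = 0 := by linear_combination -h
    rcases mul_eq_zero.mp this with h' | h'
    · exact h0 h'
    · exact h1 h'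
  have hA : t • (1 : Matrix (Fin 6) (Fin 6) ℂ) - LinearMap.toMatrix' L =
      !![t, 0, 0, -(α^2+α+1), -1, 0;
         1+α, t, 0, 1, 1, -(α+α^2);
         (α^2+1)/2, -((α^2+2*α+1)/2), t, 0, 0, -1;
         0, 0, -1, t, 0, 0;
         1, 0, 0, α^2+α+1, t+α^2+α+1, -α;
         -((α^2+2*α+1)/2), (α^2+2*α+1)/2, 0, 0, 0, t+α^2+α+1] := by
    ext i j
    rw [Matrix.sub_apply, Matrix.smul_apply, Matrix.one_apply, LinearMap.toMatrix'_apply]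
    fin_cases i <;> fin_cases j <;>
      (try simp [hL, cv1,cv2,cv3,cv4,cv5,dv1,dv2,dv3,dv4,ev1,ev2,ev3,fv1,fv2,gv1]) <;>
      (try field_simp [h0, h1, h2, show (-1 - α) ≠ 0 from fun h => h1 (by linear_combination -h)]) <;>
      first
        | rfl
        | ring1
        | linear_combination hα
        | linear_combination -hα
        | linear_combination α*hα
        | linear_combination (-α)*hα
        | linear_combination 2*hα
        | linear_combination -2*hα
        | linear_combination (α+2)*hα
        | linear_combination (-α-2)*hα
        | linear_combination ((α+2)/2)*hα
        | linear_combination (-(α+2)/2)*hα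
        | linear_combination t*hα
        | linear_combination (-t)*hα
        | linear_combination (t+1)*hα
        | linear_combination (-t-1)*hα
        | linear_combination (t - α^2 - 2*α + 1)*hα
        | linear_combination (t + α^2 + 2*α + 1)*hα
        | linear_combination (t - α^2 - α + 1)*hα
        | linear_combination (-t + α^2 + 2*α - 1)*hα
        | linear_combination (-t - α^2 - 2*α - 1)*hα
        | linear_combination (-t + α^2 + α - 1)*hα
        | linear_combination (t - 2*α^2 - 3*α + 1)*hα
        | linear_combination (t + α + 1)*hα
        | linear_combination (t - 2*α^2 - 2*α + 1)*hα
        | linear_combination (-t + 2*α^2 + 3*α - 1)*hα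
        | linear_combination (-t - α - 1)*hα
        | linear_combination (-t + 2*α^2 + 2*α - 1)*hα
        | linear_combination (α^2 + 2*α)*hα
        | linear_combination (-(α^2) - 2*α)*hα
        | linear_combination (α^2 + α)*hα
        | linear_combination (-(α^2) - α)*hα
        | exact h0
        | exact mul_ne_zero h0 (fun h => h1 (by linear_combination -h))
  rw [hA]
  rw [det6]
  linear_combination ((1/2)*α^5*t + (1/2)*α^5 + (3/2)*α^4*t + 2*α^4 + (1/2)*α^3*t^3
    + α^3*t^2 + (7/2)*α^3*t + 3*α^3 + (3/2)*α^2*t^3 + (3/2)*α^2*t^2 + 5*α^2*t + 2*α^2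
    + (3/2)*α*t^4 + 2*α*t^3 + 3*α*t^2 + (7/2)*α*t + α + 2*t^4 + (7/2)*t^2 + 2*t + 1) * hα
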